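/- Let K be a commutative ring with 1 and G a group. For x ∈ V(KG) and y ∈ V_*(KG), the conjugate x⁻¹yx lies in V_*(KG) if and only if xx* commutes with y. -/

import Mathlib

open MonoidAlgebra

variable (K G : Type*) [CommRing K] [Group G]

/-- The augmentation homomorphism of the group algebra `K[G]`. -/
noncomputable def aug : MonoidAlgebra K G →* K :=
  ((MonoidAlgebra.lift K K G) 1 : MonoidAlgebra K G →ₐ[K] K).toMonoidHom

/-- The group `V(KG)` of normalized units of the group algebra `K[G]`. -/
noncomputable def V : Subgroup (MonoidAlgebra K G)ˣ :=
  (Units.map (aug K G)).ker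

/-- The canonical involutive anti-automorphism `a ↦ a*` of the group algebra,
obtained by extending `g ↦ g⁻¹` linearly. -/
noncomputable def gstar : MonoidAlgebra K G → MonoidAlgebra K G :=
  MonoidAlgebra.mapDomain (fun g : G => g⁻¹)

variable {K G}

lemma gstar_one : gstar K G 1 = 1 := by
  unfold gstar
  rw [MonoidAlgebra.one_def, MonoidAlgebra.mapDomain_single, inv_one]

lemma gstar_gstar (a : MonoidAlgebra K G) : gstar K G (gstar K G a) = a := by
  unfold gstar
  ext g
  simp [MonoidAlgebra.mapDomain, ← Finsupp.mapDomain_comp]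

lemma gstar_mul (a b : MonoidAlgebra K G) :
    gstar K G (a * b) = gstar K G b * gstar K G a := by
  induction a using MonoidAlgebra.induction_linear with
  | zero => simp [gstar, MonoidAlgebra.mapDomain_zero]
  | add f g hf hg =>
      simp only [gstar, add_mul, MonoidAlgebra.mapDomain_add] at hf hg ⊢
      rw [hf, hg, mul_add]
  | single g c =>
    induction b using MonoidAlgebra.induction_linear with
    | zero => simp [gstar, MonoidAlgebra.mapDomain_zero]
    | add f' g' hf hg =>
        simp only [gstar, mul_add, MonoidAlgebra.mapDomain_add] at hf hg ⊢
        rw [hf, hg, add_mul]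
    | single h d =>
      rw [MonoidAlgebra.single_mul_single]
      unfold gstar
      simp only [MonoidAlgebra.mapDomain_single, mul_inv_rev]
      rw [MonoidAlgebra.single_mul_single, mul_comm d c]

variable (K G)

/-- The subgroup of unitary units: units `u` with `u* = u⁻¹`. -/
noncomputable def unitaryUnits : Subgroup (MonoidAlgebra K G)ˣ where
  carrier := {u | gstar K G ↑u = ↑u⁻¹}
  one_mem' := by simpa using gstar_one
  mul_mem' := by
    intro u v hu hv
    show gstar K G ↑(u * v) = ↑(u * v)⁻¹
    rw [Units.val_mul, gstar_mul, hu, hv, mul_inv_rev, Units.val_mul]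
  inv_mem' := by
    intro u hu
    have hu' : gstar K G ↑u = ↑u⁻¹ := hu
    show gstar K G ↑u⁻¹ = ↑u⁻¹⁻¹
    rw [inv_inv, ← hu', gstar_gstar]

/-- The group `V_*(KG)` of unitary normalized units. -/
noncomputable def Vstar : Subgroup (MonoidAlgebra K G)ˣ :=
  V K G ⊓ unitaryUnits K G

/-- `x ∈ K[G]` is *unitary* if it is invertible with `x* = x⁻¹`,
equivalently `x ⬝ x* = x* ⬝ x = 1`. -/
def IsUnitaryElem (x : MonoidAlgebra K G) : Prop :=
  x * gstar K G x = 1 ∧ gstar K G x * x = 1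

/-- `ḡ`: the sum in `K[G]` of the distinct powers of `g`. -/
noncomputable def gbar (g : G) : MonoidAlgebra K G :=
  ∑ i ∈ Finset.range (orderOf g), (MonoidAlgebra.of K G g) ^ i

/-- The bicyclic unit `u_{g,h} = 1 + (g-1)hḡ`. -/
noncomputable def bicyclic (g h : G) : MonoidAlgebra K G :=
  1 + (MonoidAlgebra.of K G g - 1) * MonoidAlgebra.of K G h * gbar K G g

/-- **Lemma 2.1**: For `x ∈ V(KG)` and `y ∈ V_*(KG)`, we have `x⁻¹yx ∈ V_*(KG)` iff
`xx*` commutes with `y`. -/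
theorem conj_mem_Vstar_iff (K : Type*) [CommRing K] (G : Type*) [Group G]
    (x y : (MonoidAlgebra K G)ˣ) (hx : x ∈ V K G) (hy : y ∈ Vstar K G) :
    x⁻¹ * y * x ∈ Vstar K G ↔
      Commute ((x : MonoidAlgebra K G) * gstar K G x) (y : MonoidAlgebra K G) := by
  obtain ⟨hyV, hyU⟩ := hy
  have hyU' : gstar K G (↑y : MonoidAlgebra K G) = (↑y⁻¹ : MonoidAlgebra K G) := hyU
  have hst : gstar K G (↑x : MonoidAlgebra K G) * gstar K G (↑x⁻¹ : MonoidAlgebra K G) = 1 := by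
    rw [← gstar_mul]
    simp [gstar_one]
  have hts : gstar K G (↑x⁻¹ : MonoidAlgebra K G) * gstar K G (↑x : MonoidAlgebra K G) = 1 := by
    rw [← gstar_mul]
    simp [gstar_one]
  set xs : (MonoidAlgebra K G)ˣ :=
    ⟨gstar K G (↑x : MonoidAlgebra K G), gstar K G (↑x⁻¹ : MonoidAlgebra K G), hst, hts⟩ with hxs
  have hVmem : x⁻¹ * y * x ∈ V K G := mul_mem (mul_mem (inv_mem hx) hyV) hx
  have hiff : (x⁻¹ * y * x ∈ Vstar K G) ↔ (x⁻¹ * y * x ∈ unitaryUnits K G) := by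
    simp [Vstar, Subgroup.mem_inf, hVmem]
  rw [hiff]
  have hmem : (x⁻¹ * y * x ∈ unitaryUnits K G) ↔
      gstar K G (↑(x⁻¹ * y * x) : MonoidAlgebra K G) = (↑(x⁻¹ * y * x)⁻¹ : MonoidAlgebra K G) :=
    Iff.rfl
  rw [hmem]
  have hL : gstar K G (↑(x⁻¹ * y * x) : MonoidAlgebra K G) =
      (↑(xs * y⁻¹ * xs⁻¹) : MonoidAlgebra K G) := by
    simp only [Units.val_mul, gstar_mul, hyU']
    show gstar K G (↑x : MonoidAlgebra K G) * ((↑y⁻¹ : MonoidAlgebra K G) *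
        gstar K G (↑x⁻¹ : MonoidAlgebra K G)) = _
    have : (↑xs⁻¹ : MonoidAlgebra K G) = gstar K G (↑x⁻¹ : MonoidAlgebra K G) := rfl
    rw [this, mul_assoc]
  rw [hL]
  have hcomm : Commute ((x : MonoidAlgebra K G) * gstar K G x) (y : MonoidAlgebra K G) ↔
      Commute (x * xs) y := by
    constructor
    · intro h
      exact Units.ext (by simpa [Units.val_mul] using h.eq)
    · intro h
      have := congrArg (Units.val) h.eq
      simpa [Units.val_mul, Commute, SemiconjBy] using this
  rw [hcomm]
  rw [show ((↑(xs * y⁻¹ * xs⁻¹) : MonoidAlgebra K G) = (↑(x⁻¹ * y * x)⁻¹ : MonoidAlgebra K G)) ↔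
      (xs * y⁻¹ * xs⁻¹ = (x⁻¹ * y * x)⁻¹) from (Units.ext_iff).symm]
  rw [mul_inv_rev, mul_inv_rev, inv_inv]
  constructor
  · intro h
    have h1 : x * xs * y⁻¹ = y⁻¹ * (x * xs) := by
      have := congrArg (fun z => x * z * xs) h
      simpa [mul_assoc] using this
    exact Commute.inv_right_iff.mp h1
  · intro h
    have h1 : x * xs * y⁻¹ = y⁻¹ * (x * xs) := h.inv_right
    have := congrArg (fun z => x⁻¹ * z * xs⁻¹) h1
    simpa [mul_assoc] using this
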